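/- Let D be a contractive distance on two-qubit density matrices. Then for every q ∈ [0,1] and every c1 ∈ [-1,1], D(ρ(q·c1,0,0), ρ(0,0,0)) ≤ D(ρ(c1,0,0), ρ(0,0,0)), where ρ(0,0,0) = I4/4 is the maximally mixed state. -/

import Mathlib

open Matrix Kronecker
open scoped ComplexOrder

noncomputable section

/-- 2×2 complex matrices (single-qubit operators). -/
abbrev Mat2 := Matrix (Fin 2) (Fin 2) ℂ

/-- 4×4 complex matrices (two-qubit operators), indexed by `Fin 2 × Fin 2`. -/
abbrev Mat4 := Matrix (Fin 2 × Fin 2) (Fin 2 × Fin 2) ℂ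

/-- Pauli matrix σ₁ (x). -/
def σ1 : Mat2 := !![0, 1; 1, 0]

/-- Pauli matrix σ₂ (y). -/
def σ2 : Mat2 := !![0, -Complex.I; Complex.I, 0]

/-- Pauli matrix σ₃ (z). -/
def σ3 : Mat2 := !![1, 0; 0, -1]

/-- The Bell-diagonal state ρ(c1,c2,c3) = (1/4)(I₄ + c1 σ₁⊗σ₁ + c2 σ₂⊗σ₂ + c3 σ₃⊗σ₃). -/
def BD (c1 c2 c3 : ℝ) : Mat4 :=
  (1 / 4 : ℂ) • ((1 : Mat4) + (c1 : ℂ) • (σ1 ⊗ₖ σ1) + (c2 : ℂ) • (σ2 ⊗ₖ σ2)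
    + (c3 : ℂ) • (σ3 ⊗ₖ σ3))

/-- A two-qubit density matrix: positive semidefinite with unit trace. -/
def IsDensityMatrix (ρ : Mat4) : Prop := ρ.PosSemidef ∧ ρ.trace = 1

/-- A CPTP map given by finitely many Kraus operators. -/
def IsCPTP (Λ : Mat4 → Mat4) : Prop :=
  ∃ (n : ℕ) (K : Fin n → Mat4),
    (∑ i, (K i)ᴴ * K i) = 1 ∧ ∀ X, Λ X = ∑ i, K i * X * (K i)ᴴ

/-- A distance `D` is contractive if it contracts under every CPTP map. -/
def Contractive (D : Mat4 → Mat4 → ℝ) : Prop :=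
  ∀ Λ : Mat4 → Mat4, IsCPTP Λ → ∀ ρ σ : Mat4,
    IsDensityMatrix ρ → IsDensityMatrix σ → D (Λ ρ) (Λ σ) ≤ D ρ σ

/-- A distance `D` is invariant under transposition. -/
def TransposeInvariant (D : Mat4 → Mat4 → ℝ) : Prop :=
  ∀ ρ σ : Mat4, IsDensityMatrix ρ → IsDensityMatrix σ → D ρᵀ σᵀ = D ρ σ

/-- A distance `D` is jointly convex. -/
def JointlyConvex (D : Mat4 → Mat4 → ℝ) : Prop :=
  ∀ q : ℝ, 0 ≤ q → q ≤ 1 → ∀ ρ σ τ ς : Mat4,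
    IsDensityMatrix ρ → IsDensityMatrix σ → IsDensityMatrix τ → IsDensityMatrix ς →
    D (q • ρ + (1 - q) • σ) (q • τ + (1 - q) • ς) ≤ q * D ρ τ + (1 - q) * D σ ς

/-- A classical-classical two-qubit state: ∑ᵢⱼ pᵢⱼ |aᵢ⟩⟨aᵢ| ⊗ |bⱼ⟩⟨bⱼ| with (pᵢⱼ) a
probability distribution and {aᵢ}, {bⱼ} orthonormal bases of ℂ². -/
def IsClassical (χ : Mat4) : Prop :=
  ∃ (p : Fin 2 → Fin 2 → ℝ) (a b : Fin 2 → Fin 2 → ℂ),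
    (∀ i j, 0 ≤ p i j) ∧ (∑ i, ∑ j, p i j = 1) ∧
    (∀ i i', ∑ k, (starRingEnd ℂ) (a i k) * a i' k = if i = i' then 1 else 0) ∧
    (∀ j j', ∑ k, (starRingEnd ℂ) (b j k) * b j' k = if j = j' then 1 else 0) ∧
    χ = ∑ i, ∑ j, (p i j : ℂ) •
      (Matrix.vecMulVec (a i) (star (a i)) ⊗ₖ Matrix.vecMulVec (b j) (star (b j)))

/-- Membership in the tetrahedron of Bell-diagonal states. -/
def InTetra (c : ℝ × ℝ × ℝ) : Prop :=
  c ∈ convexHull ℝ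
    ({((1 : ℝ), (-1 : ℝ), (1 : ℝ)), ((-1 : ℝ), (1 : ℝ), (1 : ℝ)),
      ((1 : ℝ), (1 : ℝ), (-1 : ℝ)), ((-1 : ℝ), (-1 : ℝ), (-1 : ℝ))} : Set (ℝ × ℝ × ℝ))

/-- Geometric discord: distance to the set of classical states. -/
def QD (D : Mat4 → Mat4 → ℝ) (ρ : Mat4) : ℝ :=
  sInf {x : ℝ | ∃ χ : Mat4, IsClassical χ ∧ x = D ρ χ}

/-- The Pauli matrices, indexed. -/
def pauli : Fin 3 → Mat2 := ![σ1, σ2, σ3]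



private lemma sigma1_herm : σ1ᴴ = σ1 := by
  ext i j; fin_cases i <;> fin_cases j <;> simp [σ1]

private lemma sigma1_sq : σ1 * σ1 = 1 := by
  ext i j; fin_cases i <;> fin_cases j <;>
    simp [σ1, Matrix.mul_apply, Fin.sum_univ_two, Matrix.one_apply]

private lemma sigma3_herm : σ3ᴴ = σ3 := by
  ext i j; fin_cases i <;> fin_cases j <;> simp [σ3]

private lemma sigma3_sq : σ3 * σ3 = 1 := by
  ext i j; fin_cases i <;> fin_cases j <;>
    simp [σ3, Matrix.mul_apply, Fin.sum_univ_two, Matrix.one_apply]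

private lemma sigma313 : σ3 * σ1 * σ3 = -σ1 := by
  ext i j; fin_cases i <;> fin_cases j <;>
    simp [σ1, σ3, Matrix.mul_apply, Fin.sum_univ_two, Matrix.neg_apply]

private lemma kron_conjT (A B : Mat2) : (A ⊗ₖ B)ᴴ = Aᴴ ⊗ₖ Bᴴ := by
  ext i j
  simp [Matrix.conjTranspose_apply, Matrix.kroneckerMap_apply]

/-- σ₁ ⊗ σ₁, the key operator. -/
private def Sx : Mat4 := σ1 ⊗ₖ σ1

private lemma Sx_herm : Sxᴴ = Sx := by
  rw [Sx, kron_conjT, sigma1_herm]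

private lemma Sx_sq : Sx * Sx = 1 := by
  rw [Sx, ← Matrix.mul_kronecker_mul, sigma1_sq, Matrix.one_kronecker_one]

private lemma trace_Sx : Sx.trace = 0 := by
  have h : σ1.trace = 0 := by simp [σ1, Matrix.trace_fin_two]
  simp [Sx, Matrix.trace_kronecker, h]

private lemma BD_eq (a : ℝ) : BD a 0 0 = (1 / 4 : ℂ) • (1 : Mat4) + ((a : ℂ) / 4) • Sx := by
  unfold BD
  rw [Complex.ofReal_zero, zero_smul, zero_smul, add_zero, add_zero]
  rw [show σ1 ⊗ₖ σ1 = Sx from rfl]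
  module

private lemma trace_BD (a : ℝ) : (BD a 0 0).trace = 1 := by
  have h1 : (1 : Mat4).trace = 4 := by simp [Matrix.trace_one]
  rw [BD_eq, Matrix.trace_add, Matrix.trace_smul, Matrix.trace_smul, h1, trace_Sx]
  simp

private lemma BD_density {a : ℝ} (ha : a ∈ Set.Icc (-1 : ℝ) 1) :
    IsDensityMatrix (BD a 0 0) := by
  constructor
  · -- positive semidefinite
    set c : ℝ := Real.sqrt ((1 + a) / 16) with hc
    set d : ℝ := Real.sqrt ((1 - a) / 16) with hd
    have hc2 : c * c = (1 + a) / 16 := by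
      rw [hc]; exact Real.mul_self_sqrt (by linarith [ha.1])
    have hd2 : d * d = (1 - a) / 16 := by
      rw [hd]; exact Real.mul_self_sqrt (by linarith [ha.2])
    set B : Mat4 := (c : ℂ) • ((1 : Mat4) + Sx) + (d : ℂ) • ((1 : Mat4) - Sx) with hB
    have hBH : Bᴴ = B := by
      simp [hB, Matrix.conjTranspose_add, Matrix.conjTranspose_smul,
        Matrix.conjTranspose_sub, Sx_herm, Complex.conj_ofReal]
    have hmul : ((1 : Mat4) + Sx) * ((1 : Mat4) + Sx) = (2 : ℂ) • ((1 : Mat4) + Sx) := by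
      rw [add_mul, mul_add, mul_add, Sx_sq]
      simp only [one_mul, mul_one]
      rw [smul_add, two_smul, two_smul]
      abel
    have hmul2 : ((1 : Mat4) - Sx) * ((1 : Mat4) - Sx) = (2 : ℂ) • ((1 : Mat4) - Sx) := by
      rw [sub_mul, mul_sub, mul_sub, Sx_sq]
      simp only [one_mul, mul_one]
      rw [smul_sub, two_smul, two_smul]
      abel
    have hmix : ((1 : Mat4) + Sx) * ((1 : Mat4) - Sx) = 0 := by
      rw [add_mul, mul_sub, mul_sub, Sx_sq]
      simp only [one_mul, mul_one]
      abel
    have hmix2 : ((1 : Mat4) - Sx) * ((1 : Mat4) + Sx) = 0 := by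
      rw [sub_mul, mul_add, mul_add, Sx_sq]
      simp only [one_mul, mul_one]
      abel
    have expand : Bᴴ * B = ((c : ℂ) * c * 2) • ((1 : Mat4) + Sx)
        + ((d : ℂ) * d * 2) • ((1 : Mat4) - Sx) := by
      rw [hBH, hB, add_mul, mul_add, mul_add, Matrix.smul_mul, Matrix.smul_mul,
        Matrix.smul_mul, Matrix.smul_mul, Matrix.mul_smul, Matrix.mul_smul,
        Matrix.mul_smul, Matrix.mul_smul, hmul, hmul2, hmix, hmix2]
      simp only [smul_zero, add_zero, zero_add, smul_smul]
      module
    have key : BD a 0 0 = Bᴴ * B := by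
      rw [expand, BD_eq]
      have e1 : ((c : ℂ) * c : ℂ) = ((1 + a) / 16 : ℝ) := by
        rw [← Complex.ofReal_mul, hc2]
      have e2 : ((d : ℂ) * d : ℂ) = ((1 - a) / 16 : ℝ) := by
        rw [← Complex.ofReal_mul, hd2]
      rw [e1, e2]
      push_cast
      module
    rw [key]
    exact Matrix.posSemidef_conjTranspose_mul_self B
  · exact trace_BD a

/-- the distance from ρ(c1,0,0) to the maximally mixed state contracts when
c1 is scaled by q ∈ [0,1]. -/
theorem distance_contracts_along_c1_axis
    (D : Mat4 → Mat4 → ℝ) (hD : Contractive D)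
    (q c1 : ℝ) (hq : q ∈ Set.Icc (0 : ℝ) 1) (hc1 : c1 ∈ Set.Icc (-1 : ℝ) 1) :
    D (BD (q * c1) 0 0) (BD 0 0 0) ≤ D (BD c1 0 0) (BD 0 0 0) := by
  obtain ⟨hq0, hq1⟩ := hq
  set p : ℝ := (1 + q) / 2 with hp
  have hp0 : (0:ℝ) ≤ p := by rw [hp]; linarith
  have hp1 : (0:ℝ) ≤ 1 - p := by rw [hp]; linarith
  set T : Mat4 := σ3 ⊗ₖ (1 : Mat2) with hT
  have hT_herm : Tᴴ = T := by
    rw [hT, kron_conjT, sigma3_herm, Matrix.conjTranspose_one]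
  have hT_sq : T * T = 1 := by
    rw [hT, ← Matrix.mul_kronecker_mul, sigma3_sq, one_mul, Matrix.one_kronecker_one]
  have hTST : T * Sx * T = -Sx := by
    rw [hT, Sx, ← Matrix.mul_kronecker_mul, ← Matrix.mul_kronecker_mul, sigma313,
      one_mul, mul_one]
    ext i j
    simp [Matrix.kroneckerMap_apply, Matrix.neg_apply]
  set Λ : Mat4 → Mat4 := fun X => (p : ℂ) • X + ((1 - p : ℝ) : ℂ) • (T * X * T) with hΛ
  have hCPTP : IsCPTP Λ := by
    refine ⟨2, ![(Real.sqrt p : ℂ) • 1, (Real.sqrt (1 - p) : ℂ) • T], ?_, ?_⟩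
    · simp only [Fin.sum_univ_two, Matrix.cons_val_zero, Matrix.cons_val_one, Matrix.head_cons]
      simp only [Matrix.conjTranspose_smul, Matrix.conjTranspose_one, hT_herm,
        Complex.star_def, Complex.conj_ofReal, Matrix.smul_mul, Matrix.mul_smul,
        one_mul, hT_sq, smul_smul, ← Complex.ofReal_mul,
        Real.mul_self_sqrt hp0, Real.mul_self_sqrt hp1]
      rw [← add_smul, ← Complex.ofReal_add]
      norm_num
    · intro X
      simp only [Fin.sum_univ_two, Matrix.cons_val_zero, Matrix.cons_val_one, Matrix.head_cons]
      simp only [Matrix.conjTranspose_smul, Matrix.conjTranspose_one, hT_herm,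
        Complex.star_def, Complex.conj_ofReal, Matrix.smul_mul, Matrix.mul_smul,
        one_mul, mul_one, smul_smul, ← Complex.ofReal_mul,
        Real.mul_self_sqrt hp0, Real.mul_self_sqrt hp1]
      rfl
  have hact : ∀ a : ℝ, Λ (BD a 0 0) = BD ((2 * p - 1) * a) 0 0 := by
    intro a
    simp only [hΛ]
    rw [BD_eq a, BD_eq ((2 * p - 1) * a)]
    rw [Matrix.mul_add, Matrix.add_mul, Matrix.mul_smul, Matrix.mul_smul,
      Matrix.smul_mul, Matrix.smul_mul, mul_one, hT_sq, hTST]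
    push_cast
    module
  have h2p1 : 2 * p - 1 = q := by rw [hp]; ring
  have key := hD Λ hCPTP (BD c1 0 0) (BD 0 0 0) (BD_density hc1)
    (BD_density (by constructor <;> norm_num))
  rw [hact c1, hact 0, h2p1, mul_zero] at key
  exact key
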